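/- Non-identifiability under equal parameters (Proposition 1(c) core computation): if α₁ = α₂ = α and β₁ = β₂ = β ≠ 0, then the combined model is observationally equivalent to a single case-control study with parameters (α, β, f), and hence for any α' there exists a density f' making (α', β, f') observationally equivalent, so α is not identifiable. Formally: if (f₁, f₀) denote the common case/control densities of both studies, then the map from (α, f) to (f₁, f₀) with β fixed is not injective in α. -/

import Mathlib

open Real Matrix MeasureTheory

/-- The logistic function φ(t) = eᵗ/(1+eᵗ). -/
noncomputable def phi (t : ℝ) : ℝ := Real.exp t / (1 + Real.exp t)

lemma phi_nonneg (t : ℝ) : 0 ≤ phi t := by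
  unfold phi
  have := Real.exp_pos t
  positivity

lemma phi_le_one (t : ℝ) : phi t ≤ 1 := by
  unfold phi
  have h := Real.exp_pos t
  rw [div_le_one (by linarith)]
  linarith

lemma key_identity (E k c fx : ℝ) (hE : 0 < E) (hk : 0 < k) (hc0 : 0 < c)
    (hc1 : c < 1) :
    (k * E / (1 + k * E)) *
      ((k * c / (1 - c)) / (1 + k * c / (1 - c)) * (E / (1 + E) * fx / c)
        + (1 - (k * c / (1 - c)) / (1 + k * c / (1 - c))) *
          ((1 - E / (1 + E)) * fx / (1 - c)))
    = (k * c / (1 - c)) / (1 + k * c / (1 - c)) * (E / (1 + E) * fx / c) := by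
  have h1 : (0:ℝ) < 1 + E := by linarith
  have h2 : (0:ℝ) < 1 + k * E := by positivity
  have h3 : (0:ℝ) < 1 - c := by linarith
  have h4 : (0:ℝ) < 1 + k * c / (1 - c) := by positivity
  field_simp
  ring

/-- Non-identifiability under equal parameters (Proposition 1(c) core
computation): when the two studies share the same intercept α and slope β ≠ 0
(so the combined model is observationally equivalent to a single case-control
study with parameters (α, β, f)), the map (α, f) ↦ (f₁, f₀) with β fixed is not
injective in α: for any α' ≠ α there are a density f' and c' ∈ (0,1) making
(α', β, f') observationally equivalent, i.e. producing the same common case and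
control densities f₁, f₀ of both studies. -/
theorem nonidentifiability_equal_parameters {d : ℕ}
    (α : ℝ) (β : Fin d → ℝ) (hβ : β ≠ 0)
    (f : (Fin d → ℝ) → ℝ) (hf_cont : Continuous f) (hf_pos : ∀ x, 0 < f x)
    (hf_int : Integrable f) (hf_norm : (∫ x, f x) = 1)
    (c : ℝ) (hc : c = ∫ x, phi (α + β ⬝ᵥ x) * f x) (hc0 : 0 < c) (hc1 : c < 1)
    (f₁ f₀ : (Fin d → ℝ) → ℝ)
    (hf₁ : ∀ x, f₁ x = phi (α + β ⬝ᵥ x) * f x / c)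
    (hf₀ : ∀ x, f₀ x = (1 - phi (α + β ⬝ᵥ x)) * f x / (1 - c)) :
    ∀ α' : ℝ, α' ≠ α →
      ∃ (f' : (Fin d → ℝ) → ℝ) (c' : ℝ),
        (∀ x, 0 ≤ f' x) ∧ Integrable f' ∧ (∫ x, f' x) = 1 ∧
        0 < c' ∧ c' < 1 ∧ c' = (∫ x, phi (α' + β ⬝ᵥ x) * f' x) ∧
        (∀ x, f₁ x = phi (α' + β ⬝ᵥ x) * f' x / c') ∧
        (∀ x, f₀ x = (1 - phi (α' + β ⬝ᵥ x)) * f' x / (1 - c')) := by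
  intro α' hα'
  have hc1' : (0:ℝ) < 1 - c := by linarith
  set k : ℝ := Real.exp (α' - α) with hk_def
  have hk : 0 < k := Real.exp_pos _
  set r : ℝ := k * c / (1 - c) with hr_def
  have hr : 0 < r := by positivity
  have h1r : (0:ℝ) < 1 + r := by linarith
  set c' : ℝ := r / (1 + r) with hc'_def
  have hc'0 : 0 < c' := by positivity
  have hc'1 : c' < 1 := by
    rw [hc'_def, div_lt_one h1r]; linarith
  set f' : (Fin d → ℝ) → ℝ := fun x => c' * f₁ x + (1 - c') * f₀ x with hf'_def
  -- key pointwise identity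
  have hkey : ∀ x, phi (α' + β ⬝ᵥ x) * f' x = c' * f₁ x := by
    intro x
    have hE' : Real.exp (α' + β ⬝ᵥ x) = k * Real.exp (α + β ⬝ᵥ x) := by
      rw [hk_def, ← Real.exp_add]; congr 1; ring
    have := key_identity (Real.exp (α + β ⬝ᵥ x)) k c (f x)
      (Real.exp_pos _) hk hc0 hc1
    simp only [hf'_def, hf₁ x, hf₀ x, phi, hE', hc'_def, hr_def]
    exact this
  -- f' sums
  have hf'pos : ∀ x, 0 ≤ f' x := by
    intro x
    have h1 : 0 ≤ f₁ x := by
      rw [hf₁ x]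
      have := phi_nonneg (α + β ⬝ᵥ x)
      have := (hf_pos x).le
      positivity
    have h0 : 0 ≤ f₀ x := by
      rw [hf₀ x]
      have := phi_le_one (α + β ⬝ᵥ x)
      have := (hf_pos x).le
      have : 0 ≤ 1 - phi (α + β ⬝ᵥ x) := by linarith
      positivity
    have : 0 ≤ 1 - c' := by linarith
    positivity
  -- integrability pieces
  have hβcont : Continuous fun x : Fin d → ℝ => β ⬝ᵥ x := by
    simp only [dotProduct]
    exact continuous_finset_sum _ fun i _ =>
      (continuous_const.mul (continuous_apply i))
  have hφcont : Continuous fun x : Fin d → ℝ => phi (α + β ⬝ᵥ x) := by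
    apply Continuous.div
    · exact Real.continuous_exp.comp (continuous_const.add hβcont)
    · exact continuous_const.add
        (Real.continuous_exp.comp (continuous_const.add hβcont))
    · intro x
      have := Real.exp_pos (α + β ⬝ᵥ x)
      positivity
  have hφf_int : Integrable (fun x => phi (α + β ⬝ᵥ x) * f x) :=
    hf_int.bdd_mul (c := 1) hφcont.aestronglyMeasurable
      (Filter.Eventually.of_forall fun x => by
        rw [Real.norm_eq_abs, abs_of_nonneg (phi_nonneg _)]
        exact phi_le_one _)
  have hf₁eq : f₁ = fun x => phi (α + β ⬝ᵥ x) * f x / c := funext hf₁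
  have hf₀eq : f₀ = fun x => (f x - phi (α + β ⬝ᵥ x) * f x) / (1 - c) := by
    funext x; rw [hf₀ x]; ring
  have hf₁_int : Integrable f₁ := by rw [hf₁eq]; exact hφf_int.div_const c
  have hf₀_int : Integrable f₀ := by
    rw [hf₀eq]; exact (hf_int.sub hφf_int).div_const (1 - c)
  have hf₁_norm : (∫ x, f₁ x) = 1 := by
    rw [hf₁eq]; simp only [integral_div, ← hc]
    exact div_self hc0.ne'
  have hf₀_norm : (∫ x, f₀ x) = 1 := by
    rw [hf₀eq]; simp only [integral_div]
    rw [integral_sub hf_int hφf_int, hf_norm, ← hc]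
    exact div_self hc1'.ne'
  have hf'_int : Integrable f' :=
    (hf₁_int.const_mul c').add (hf₀_int.const_mul (1 - c'))
  refine ⟨f', c', hf'pos, hf'_int, ?_, hc'0, hc'1, ?_, ?_, ?_⟩
  · rw [hf'_def]
    rw [integral_add (hf₁_int.const_mul c') (hf₀_int.const_mul (1 - c')),
      integral_const_mul, integral_const_mul, hf₁_norm, hf₀_norm]
    ring
  · have : (fun x => phi (α' + β ⬝ᵥ x) * f' x) = fun x => c' * f₁ x :=
      funext hkey
    rw [this, integral_const_mul, hf₁_norm, mul_one]
  · intro x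
    rw [hkey x]
    field_simp
  · intro x
    have h2 : (1 - phi (α' + β ⬝ᵥ x)) * f' x = (1 - c') * f₀ x := by
      have := hkey x
      simp only [hf'_def] at *
      nlinarith [this]
    rw [h2]
    have : (1:ℝ) - c' ≠ 0 := by linarith
    field_simp
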